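/- arXiv:2303.01132 — 4 statements merged into one kernel-verified Lean document; each statement's English description precedes it below -/
import Mathlib

section
/- Let K be a field, n ≥ m ≥ 1 and t ≥ 2 integers. Then the colon ideal (I_{n,m}^t : x_{n-m+1}x_{n-m+2}···x_n) equals I_{n,m}^{t-1}. -/
open MvPolynomial

/-- The variable `X k` of `K[x_0,…,x_{N-1}]` when `k < N` (and `1` otherwise;
this junk value is never used under the hypotheses of the statements). -/
noncomputable def Xv (K : Type*) [Field K] (N k : ℕ) : MvPolynomial (Fin N) K :=
  if h : k < N then X ⟨k, h⟩ else 1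

/-- `pathIdeal K N n m` is the `m`-path ideal `I_{n,m}` of the path graph, i.e. the
monomial ideal generated by the products of `m` consecutive variables
`x_{i+1} x_{i+2} ⋯ x_{i+m}` (for `0 ≤ i ≤ n - m`), regarded in the ambient
polynomial ring `K[x_1,…,x_N]` (the variable `x_k`, `1 ≤ k ≤ N`, is `X (k-1)`). -/
noncomputable def pathIdeal (K : Type*) [Field K] (N n m : ℕ) :
    Ideal (MvPolynomial (Fin N) K) :=
  Ideal.span { p | ∃ i : ℕ, i + m ≤ n ∧ p = ∏ j ∈ Finset.range m, Xv K N (i + j) }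

/-- exponent of a single variable (junk `0` if out of range). -/
noncomputable def fv (n k : ℕ) : Fin n →₀ ℕ :=
  if h : k < n then Finsupp.single ⟨k, h⟩ 1 else 0

/-- exponent vector of the `i`-th path generator. -/
noncomputable def av (n m i : ℕ) : Fin n →₀ ℕ := ∑ j ∈ Finset.range m, fv n (i + j)

/-- exponent vectors of products of `t` generators. -/
def St (n m t : ℕ) : Set (Fin n →₀ ℕ) :=
  {e | ∃ L : Multiset ℕ, Multiset.card L = t ∧ (∀ i ∈ L, i + m ≤ n) ∧
        e = (L.map (av n m)).sum}

lemma Xv_eq (K : Type*) [Field K] (n k : ℕ) :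
    Xv K n k = monomial (fv n k) (1 : K) := by
  unfold Xv fv
  split
  · rw [X, monomial]
  · simp

lemma prod_monomial {K : Type*} [Field K] {α : Type*} (s : Finset α)
    (g : α → (Fin n →₀ ℕ)) :
    ∏ j ∈ s, (monomial (g j) (1 : K)) = monomial (∑ j ∈ s, g j) 1 := by
  classical
  induction s using Finset.cons_induction with
  | empty => simp
  | cons a s ha ih => rw [Finset.prod_cons, Finset.sum_cons, ih, monomial_mul, one_mul]

lemma prod_Xv_eq (K : Type*) [Field K] (n m i : ℕ) :
    ∏ j ∈ Finset.range m, Xv K n (i + j) = monomial (av n m i) (1 : K) := by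
  simp only [Xv_eq, av, prod_monomial]

lemma av_apply (n m i : ℕ) (k : Fin n) :
    av n m i k = if i ≤ k.val ∧ k.val < i + m then 1 else 0 := by
  classical
  have key : av n m i k = ∑ j ∈ Finset.range m, (if i + j = k.val then 1 else 0) := by
    rw [av, Finsupp.finset_sum_apply]
    refine Finset.sum_congr rfl fun j _ => ?_
    unfold fv
    rcases Nat.lt_or_ge (i + j) n with h | h
    · rw [dif_pos h, Finsupp.single_apply]
      simp [Fin.ext_iff]
    · rw [dif_neg (by omega)]
      have hne : ¬ (i + j = k.val) := by omega
      simp [hne]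
  rw [key]
  by_cases hik : i ≤ k.val
  · have hiff : ∀ j, (i + j = k.val) ↔ j = k.val - i := by omega
    simp only [hiff]
    rw [Finset.sum_ite_eq' (Finset.range m) (k.val - i) (fun _ => 1)]
    simp only [Finset.mem_range]
    congr 1
    simp only [eq_iff_iff]
    omega
  · have h1 : ∀ j ∈ Finset.range m, (if i + j = k.val then 1 else 0) = 0 := by
      intro j _
      have hne : ¬ (i + j = k.val) := by omega
      rw [if_neg hne]
    rw [Finset.sum_congr rfl h1, Finset.sum_const_zero, eq_comm, if_neg]
    omega

lemma av_le_one (n m i : ℕ) (k : Fin n) : av n m i k ≤ 1 := by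
  rw [av_apply]; split <;> omega

lemma pathIdeal_eq (K : Type*) [Field K] (n m : ℕ) :
    pathIdeal K n n m =
      Ideal.span ((fun e => monomial e (1 : K)) '' St n m 1) := by
  unfold pathIdeal
  congr 1
  ext p
  constructor
  · rintro ⟨i, hi, rfl⟩
    exact ⟨av n m i, ⟨{i}, by simp, by simpa using hi, by simp⟩,
      (prod_Xv_eq K n m i).symm⟩
  · rintro ⟨e, ⟨L, hcard, hmem, rfl⟩, rfl⟩
    obtain ⟨i, rfl⟩ := Multiset.card_eq_one.mp hcard
    exact ⟨i, hmem i (Multiset.mem_singleton_self i), by simp [prod_Xv_eq]⟩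

lemma pow_pathIdeal_eq (K : Type*) [Field K] (n m : ℕ) :
    ∀ t, pathIdeal K n n m ^ t =
      Ideal.span ((fun e => monomial e (1 : K)) '' St n m t)
  | 0 => by
      have hS : St n m 0 = {0} := by
        ext e
        constructor
        · rintro ⟨L, hcard, -, rfl⟩
          rw [Multiset.card_eq_zero.mp hcard]
          simp
        · rintro rfl
          exact ⟨0, by simp⟩
      rw [pow_zero, hS]
      simp [Ideal.one_eq_top, Ideal.span_singleton_one]
  | (t + 1) => by
      rw [pow_succ, pow_pathIdeal_eq K n m t, pathIdeal_eq, Ideal.span_mul_span']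
      congr 1
      ext p
      constructor
      · rintro ⟨x, ⟨e1, ⟨L1, hc1, hm1, rfl⟩, rfl⟩, y, ⟨e2, ⟨L2, hc2, hm2, rfl⟩, rfl⟩, rfl⟩
        refine ⟨_, ⟨L1 + L2, by simp [hc1, hc2], ?_, rfl⟩, ?_⟩
        · intro i hi
          rcases Multiset.mem_add.mp hi with h | h
          exacts [hm1 i h, hm2 i h]
        · simp only [monomial_mul, one_mul, Multiset.map_add, Multiset.sum_add]
      · rintro ⟨e, ⟨L, hcard, hmem, rfl⟩, rfl⟩
        have hne : L ≠ 0 := by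
          intro h; rw [h] at hcard; simp at hcard
        obtain ⟨i, hi⟩ := Multiset.exists_mem_of_ne_zero hne
        refine ⟨monomial ((L.erase i).map (av n m)).sum 1,
          ⟨_, ⟨L.erase i, by rw [Multiset.card_erase_of_mem hi, hcard]; rfl,
            fun j hj => hmem j (Multiset.mem_of_mem_erase hj), rfl⟩, rfl⟩,
          monomial (av n m i) 1,
          ⟨_, ⟨{i}, by simp, by simpa using hmem i hi, by simp⟩, rfl⟩, ?_⟩
        have hsum : (Multiset.map (av n m) L).sum
            = (Multiset.map (av n m) (L.erase i)).sum + av n m i := by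
          conv_lhs => rw [← Multiset.cons_erase hi]
          rw [Multiset.map_cons, Multiset.sum_cons, add_comm]
        simp only [monomial_mul, one_mul, hsum]

lemma multiset_sum_apply (n m : ℕ) (L : Multiset ℕ) (k : Fin n) :
    ((L.map (av n m)).sum) k = (L.map (fun i => av n m i k)).sum := by
  rw [← Finsupp.applyAddHom_apply, map_multiset_sum, Multiset.map_map]
  rfl

lemma key_lemma (n m : ℕ) (hm : 1 ≤ m) (hmn : m ≤ n) {t : ℕ} (ht : 1 ≤ t)
    {d e : Fin n →₀ ℕ} (he : e ∈ St n m t) (hle : e ≤ d + av n m (n - m)) :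
    ∃ e' ∈ St n m (t - 1), e' ≤ d := by
  obtain ⟨L, hcard, hmem, rfl⟩ := he
  have hne : L ≠ 0 := by
    intro h; rw [h] at hcard; simp at hcard; omega
  have hfin : L.toFinset.Nonempty := by
    obtain ⟨i, hi⟩ := Multiset.exists_mem_of_ne_zero hne
    exact ⟨i, Multiset.mem_toFinset.mpr hi⟩
  obtain ⟨i0, hi0L, hmax⟩ : ∃ i0 ∈ L, ∀ i ∈ L, i ≤ i0 :=
    ⟨L.toFinset.max' hfin, Multiset.mem_toFinset.mp (L.toFinset.max'_mem hfin),
      fun i hi => L.toFinset.le_max' i (Multiset.mem_toFinset.mpr hi)⟩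
  refine ⟨((L.erase i0).map (av n m)).sum,
    ⟨L.erase i0, by rw [Multiset.card_erase_of_mem hi0L, hcard]; rfl,
      fun j hj => hmem j (Multiset.mem_of_mem_erase hj), rfl⟩, ?_⟩
  rw [Finsupp.le_def]
  intro k
  have hsplit : ((L.map (av n m)).sum) k
      = av n m i0 k + (((L.erase i0).map (av n m)).sum) k := by
    conv_lhs => rw [← Multiset.cons_erase hi0L]
    rw [Multiset.map_cons, Multiset.sum_cons, Finsupp.add_apply]
  have hlek : ((L.map (av n m)).sum) k ≤ d k + av n m (n - m) k := by
    have h := Finsupp.le_def.mp hle k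
    rwa [Finsupp.add_apply] at h
  have hu_le : av n m (n - m) k ≤ 1 := av_le_one n m (n - m) k
  rcases Nat.eq_zero_or_pos (av n m i0 k) with hA | hA
  · rcases Nat.eq_zero_or_pos (av n m (n - m) k) with hU | hU
    · omega
    · have hkval : n - m ≤ k.val := by
        have h := av_apply n m (n - m) k
        by_contra hc
        rw [if_neg (by omega)] at h
        omega
      by_contra hc
      push_neg at hc
      have hpos : 0 < ((L.map (av n m)).sum) k := by omega
      have hex : ∃ i ∈ L, 0 < av n m i k := by
        by_contra hno
        push_neg at hno
        have hz : ((L.map (av n m)).sum) k = 0 := by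
          rw [multiset_sum_apply]
          apply Multiset.sum_eq_zero
          intro x hx
          obtain ⟨i, hiL, rfl⟩ := Multiset.mem_map.mp hx
          have h0 := hno i hiL
          omega
        omega
      obtain ⟨i, hiL, hipos⟩ := hex
      have hicond : i ≤ k.val ∧ k.val < i + m := by
        have h := av_apply n m i k
        by_contra hcond
        rw [if_neg hcond] at h
        omega
      have hi0le : i0 + m ≤ n := hmem i0 hi0L
      have hii0 : i ≤ i0 := hmax i hiL
      have : av n m i0 k = 1 := by
        rw [av_apply, if_pos (by omega)]
      omega
  · have h1 := av_le_one n m i0 k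
    omega

/-- **Lemma 2.1.** Let `K` be a field, `n ≥ m ≥ 1` and `t ≥ 2`. Then
`(I_{n,m}^t : x_{n-m+1} x_{n-m+2} ⋯ x_n) = I_{n,m}^{t-1}`. -/
theorem colon_pow_pathIdeal (K : Type*) [Field K] (n m t : ℕ)
    (hm : 1 ≤ m) (hmn : m ≤ n) (ht : 2 ≤ t) :
    (pathIdeal K n n m ^ t).colon
        (Ideal.span {∏ j ∈ Finset.range m, Xv K n (n - m + j)}) =
      pathIdeal K n n m ^ (t - 1) := by
  have hu : (∏ j ∈ Finset.range m, Xv K n (n - m + j))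
      = monomial (av n m (n - m)) (1 : K) := prod_Xv_eq K n m (n - m)
  apply le_antisymm
  · intro f hf
    rw [Ideal.mem_colon_span_singleton, hu] at hf
    rw [pow_pathIdeal_eq] at hf ⊢
    rw [mem_ideal_span_monomial_image] at hf ⊢
    intro d hd
    have hd' : d + av n m (n - m) ∈ (f * monomial (av n m (n - m)) (1 : K)).support := by
      rw [mem_support_iff, coeff_mul_monomial, mul_one]
      exact mem_support_iff.mp hd
    obtain ⟨e, heS, hle⟩ := hf _ hd'
    exact key_lemma n m hm hmn (by omega) heS hle
  · intro f hf
    rw [Ideal.mem_colon_span_singleton]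
    have hut : (∏ j ∈ Finset.range m, Xv K n (n - m + j)) ∈ pathIdeal K n n m :=
      Ideal.subset_span ⟨n - m, by omega, rfl⟩
    have hpow : pathIdeal K n n m ^ (t - 1) * pathIdeal K n n m = pathIdeal K n n m ^ t := by
      rw [← pow_succ]
      congr 1
      omega
    rw [← hpow]
    exact Ideal.mul_mem_mul hf hut
end

section
/- Let K be a field, integers 1 ≤ m ≤ n, 2 ≤ k ≤ m and t ≥ 2. Then ((I_{n,m}^t : x_{n-k+2}···x_n), x_{n-m+1}···x_{n-k+1}) = (I_{n-k,m}^t, x_{n-m+1}···x_{n-k+1}), where the left side is the ideal generated by the colon ideal (I_{n,m}^t : x_{n-k+2}···x_n) together with the monomial x_{n-m+1}···x_{n-k+1}, and I_{n-k,m} is regarded as an ideal of S via the inclusion K[x_1,…,x_{n-k}] ⊂ S. -/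
open MvPolynomial Pointwise

/-! Auxiliary lemmas -/

section Aux

variable {σ K : Type*} [Field K]

lemma myDivMonomial_sum {ι : Type*} (s : Finset ι) (f : ι → MvPolynomial σ K) (d : σ →₀ ℕ) :
    (∑ x ∈ s, f x).divMonomial d = ∑ x ∈ s, (f x).divMonomial d := by
  ext ψ
  simp [coeff_divMonomial, coeff_sum]

lemma myDivMonomial_mul_monomial (a : MvPolynomial σ K) (d s : σ →₀ ℕ) (c : K)
    (hds : ∀ i ∈ d.support, s i = 0) :
    (a * monomial s c).divMonomial d = a.divMonomial d * monomial s c := by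
  have key : ∀ i, d i ≠ 0 → s i = 0 := fun i hi => hds i (Finsupp.mem_support_iff.2 hi)
  ext ψ
  rw [coeff_divMonomial, coeff_mul_monomial', coeff_mul_monomial']
  have hiff : s ≤ d + ψ ↔ s ≤ ψ := by
    simp only [Finsupp.le_def, Finsupp.add_apply]
    constructor <;> intro h i <;> have h1 := h i
    · rcases Nat.eq_zero_or_pos (d i) with h2 | h2
      · omega
      · have := key i (by omega); omega
    · omega
  by_cases h : s ≤ ψ
  · rw [if_pos (hiff.2 h), if_pos h, coeff_divMonomial]
    congr 2
    ext i
    have h1 : s i ≤ ψ i := Finsupp.le_def.1 h i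
    simp only [Finsupp.tsub_apply, Finsupp.add_apply]
    omega
  · rw [if_neg (fun hh => h (hiff.1 hh)), if_neg h]

lemma myDivMonomial_mul (a p : MvPolynomial σ K) (d : σ →₀ ℕ)
    (hp : ∀ ψ ∈ p.support, ∀ i ∈ d.support, ψ i = 0) :
    (a * p).divMonomial d = a.divMonomial d * p := by
  conv_lhs => rw [p.as_sum]
  conv_rhs => rw [p.as_sum]
  rw [Finset.mul_sum, myDivMonomial_sum, Finset.mul_sum]
  exact Finset.sum_congr rfl fun ψ hψ =>
    myDivMonomial_mul_monomial a d ψ _ (fun i hi => hp ψ hψ i hi)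

lemma myDivMonomial_mem_span (T : Set (MvPolynomial σ K)) (d : σ →₀ ℕ)
    (hT : ∀ p ∈ T, ∀ ψ ∈ p.support, ∀ i ∈ d.support, ψ i = 0)
    {x : MvPolynomial σ K} (hx : x ∈ Ideal.span T) :
    x.divMonomial d ∈ Ideal.span T := by
  obtain ⟨c, hc, rfl⟩ := Submodule.mem_span_set.mp hx
  rw [Finsupp.sum, myDivMonomial_sum]
  apply Ideal.sum_mem
  intro p hp
  have hpT : p ∈ T := hc hp
  rw [smul_eq_mul, myDivMonomial_mul _ _ _ (hT p hpT)]
  exact Ideal.mul_mem_left _ _ (Ideal.subset_span hpT)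

lemma mem_span_of_mul_monomial (T : Set (MvPolynomial σ K)) (d : σ →₀ ℕ)
    (hT : ∀ p ∈ T, ∀ ψ ∈ p.support, ∀ i ∈ d.support, ψ i = 0)
    {f : MvPolynomial σ K} (hf : f * monomial d 1 ∈ Ideal.span T) :
    f ∈ Ideal.span T := by
  have h := myDivMonomial_mem_span T d hT hf
  rwa [divMonomial_mul_monomial] at h

lemma prod_X_eq_monomial {ι : Type*} (s : Finset ι) (g : ι → σ) :
    (∏ j ∈ s, X (g j) : MvPolynomial σ K)
      = monomial (∑ j ∈ s, Finsupp.single (g j) 1) 1 := by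
  induction s using Finset.cons_induction with
  | empty => simp
  | cons a s ha ih =>
      rw [Finset.prod_cons, ih, Finset.sum_cons, X, monomial_mul, one_mul]

lemma pow_add_le {R : Type*} [CommRing R] (A B : Ideal R) (t : ℕ) :
    (A + B) ^ t ≤ A ^ t + B := by
  induction t with
  | zero => simp [Ideal.one_eq_top]
  | succ t ih =>
      rw [pow_succ]
      calc (A + B) ^ t * (A + B) ≤ (A ^ t + B) * (A + B) := Ideal.mul_mono_left ih
        _ = A ^ t * A + (A ^ t * B + (B * A + B * B)) := by ring
        _ ≤ A ^ (t + 1) + B := by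
            rw [← pow_succ]
            refine add_le_add le_rfl ?_
            refine sup_le Ideal.mul_le_right (sup_le Ideal.mul_le_left Ideal.mul_le_right)

lemma set_pow_subset_subalgebra {R' K' : Type*} [CommSemiring K'] [CommSemiring R']
    [Algebra K' R'] {A : Subalgebra K' R'} {s : Set R'} (hs : s ⊆ A) :
    ∀ t, s ^ t ⊆ (A : Set R')
  | 0 => by
      rw [pow_zero]
      rintro x hx
      rw [Set.mem_one] at hx
      exact hx ▸ A.one_mem
  | t + 1 => by
      rw [pow_succ]
      rintro x ⟨a, ha, b, hb, rfl⟩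
      exact mul_mem (set_pow_subset_subalgebra hs t ha) (hs hb)

end Aux

/-- **Lemma 2.2.** Let `K` be a field, `1 ≤ m ≤ n`, `2 ≤ k ≤ m` and `t ≥ 2`. Then
`((I_{n,m}^t : x_{n-k+2} ⋯ x_n), x_{n-m+1} ⋯ x_{n-k+1})
  = (I_{n-k,m}^t, x_{n-m+1} ⋯ x_{n-k+1})`,
where `I_{n-k,m}` is regarded as an ideal of `S = K[x_1,…,x_n]` via the inclusion
`K[x_1,…,x_{n-k}] ⊆ S`. -/
theorem colon_pow_pathIdeal_add (K : Type*) [Field K] (n m k t : ℕ)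
    (hm : 1 ≤ m) (hmn : m ≤ n) (hk : 2 ≤ k) (hkm : k ≤ m) (ht : 2 ≤ t) :
    (pathIdeal K n n m ^ t).colon
        (Ideal.span {∏ j ∈ Finset.range (k - 1), Xv K n (n - k + 1 + j)}) +
      Ideal.span {∏ j ∈ Finset.range (m - k + 1), Xv K n (n - m + j)} =
    pathIdeal K n (n - k) m ^ t +
      Ideal.span {∏ j ∈ Finset.range (m - k + 1), Xv K n (n - m + j)} := by
  set u : MvPolynomial (Fin n) K := ∏ j ∈ Finset.range (k - 1), Xv K n (n - k + 1 + j) with hu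
  set v : MvPolynomial (Fin n) K := ∏ j ∈ Finset.range (m - k + 1), Xv K n (n - m + j) with hv
  set I := pathIdeal K n n m with hI
  set J := pathIdeal K n (n - k) m with hJ
  -- products as products over Ico
  have hIco : ∀ a r : ℕ, (∏ j ∈ Finset.range r, Xv K n (a + j))
      = ∏ i ∈ Finset.Ico a (a + r), Xv K n i := by
    intro a r
    rw [Finset.prod_Ico_eq_prod_range]
    simp
  -- J ≤ I
  have hJI : J ≤ I := by
    apply Ideal.span_mono
    rintro p ⟨i, hi, rfl⟩
    exact ⟨i, by omega, rfl⟩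
  -- I ≤ J + span {v}
  have hIJv : I ≤ J + Ideal.span {v} := by
    rw [hI, pathIdeal, Ideal.span_le]
    rintro p ⟨i, hi, rfl⟩
    by_cases hcase : i + m ≤ n - k
    · rw [Ideal.add_eq_sup]
      exact Submodule.mem_sup_left (Ideal.subset_span ⟨i, hcase, rfl⟩)
    · rw [Ideal.add_eq_sup]
      apply Submodule.mem_sup_right
      rw [Ideal.mem_span_singleton]
      have hsub : Finset.Ico (n - m) (n - m + (m - k + 1)) ⊆ Finset.Ico i (i + m) := by
        intro x hx
        rw [Finset.mem_Ico] at hx ⊢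
        omega
      refine ⟨∏ x ∈ Finset.Ico i (i + m) \ Finset.Ico (n - m) (n - m + (m - k + 1)), Xv K n x, ?_⟩
      rw [hv, hIco, hIco, mul_comm, Finset.prod_sdiff hsub]
  -- v has low variables, generators of J have low variables
  set L : Set (Fin n) := {i | (i : ℕ) < n - k + 1} with hL
  have hXvL : ∀ a : ℕ, a < n - k + 1 → a < n → Xv K n a ∈ supported K L := by
    intro a h1 h2
    rw [Xv, dif_pos h2]
    exact (X_mem_supported (R := K)).2 h1
  set SJ : Set (MvPolynomial (Fin n) K) :=
    {p | ∃ i : ℕ, i + m ≤ n - k ∧ p = ∏ j ∈ Finset.range m, Xv K n (i + j)} with hSJ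
  have hSJL : SJ ⊆ (supported K L : Subalgebra K (MvPolynomial (Fin n) K)) := by
    rintro p ⟨i, hi, rfl⟩
    exact Subalgebra.prod_mem _ fun j hj => by
      rw [Finset.mem_range] at hj
      exact hXvL (i + j) (by omega) (by omega)
  have hvL : v ∈ supported K L := by
    rw [hv]
    exact Subalgebra.prod_mem _ fun j hj => by
      rw [Finset.mem_range] at hj
      exact hXvL (n - m + j) (by omega) (by omega)
  -- T generates Q := J^t + span {v}
  set T : Set (MvPolynomial (Fin n) K) := SJ ^ t ∪ {v} with hT
  have hQ : Ideal.span T = J ^ t + Ideal.span {v} := by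
    have hsp : Ideal.span SJ ^ t = Ideal.span (SJ ^ t) := Submodule.span_pow SJ t
    rw [hT, Ideal.span_union, hJ, pathIdeal, ← hSJ, ← hsp, Ideal.add_eq_sup]
  have hTL : T ⊆ (supported K L : Subalgebra K (MvPolynomial (Fin n) K)) := by
    rintro p (hp | hp)
    · exact set_pow_subset_subalgebra hSJL t hp
    · rw [Set.mem_singleton_iff] at hp
      exact hp ▸ hvL
  -- u as a monomial in high variables
  have hnk1 : ∀ j, j < k - 1 → n - k + 1 + j < n := fun j hj => by omega
  set g : ℕ → Fin n := fun j => ⟨(n - k + 1 + j) % n, Nat.mod_lt _ (by omega)⟩ with hg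
  set d : Fin n →₀ ℕ := ∑ j ∈ Finset.range (k - 1), Finsupp.single (g j) 1 with hd
  have hug : u = monomial d 1 := by
    rw [hu, hd, ← prod_X_eq_monomial]
    refine Finset.prod_congr rfl fun j hj => ?_
    rw [Finset.mem_range] at hj
    have h2 : n - k + 1 + j < n := hnk1 j hj
    rw [Xv, dif_pos h2]
    congr 1
    rw [hg]
    exact Fin.ext (by simp [Nat.mod_eq_of_lt h2])
  have hdL : ∀ i ∈ d.support, i ∉ L := by
    intro i hi
    rw [Finsupp.mem_support_iff, hd] at hi
    have : ∃ j ∈ Finset.range (k - 1), (Finsupp.single (g j) 1 : Fin n →₀ ℕ) i ≠ 0 := by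
      by_contra hcon
      push_neg at hcon
      apply hi
      rw [Finsupp.finset_sum_apply]
      exact Finset.sum_eq_zero hcon
    obtain ⟨j, hj, hji⟩ := this
    rw [Finset.mem_range] at hj
    rw [Finsupp.single_apply_ne_zero] at hji
    have h2 : n - k + 1 + j < n := hnk1 j hj
    have : (i : ℕ) = n - k + 1 + j := by
      rw [hji.1, hg]
      simp [Nat.mod_eq_of_lt h2]
    rw [hL]
    simp only [Set.mem_setOf_eq, this]
    omega
  -- support condition for key lemma
  have hTd : ∀ p ∈ T, ∀ ψ ∈ p.support, ∀ i ∈ d.support, ψ i = 0 := by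
    intro p hp ψ hψ i hi
    by_contra hne
    have hivars : i ∈ p.vars := (mem_vars i).2 ⟨ψ, hψ, Finsupp.mem_support_iff.2 hne⟩
    have : (p.vars : Set (Fin n)) ⊆ L := mem_supported.1 (hTL hp)
    exact hdL i hi (this hivars)
  -- I^t ≤ Q
  have hItQ : I ^ t ≤ Ideal.span T := by
    rw [hQ]
    calc I ^ t ≤ (J + Ideal.span {v}) ^ t := Ideal.pow_right_mono hIJv t
      _ ≤ J ^ t + Ideal.span {v} := pow_add_le _ _ t
  -- colon ≤ Q
  have hcolon : (I ^ t).colon (Ideal.span {u}) ≤ Ideal.span T := by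
    intro f hf
    have hfu : f * u ∈ I ^ t := by
      have h := Submodule.mem_colon.1 hf u (Ideal.subset_span rfl)
      rwa [smul_eq_mul] at h
    have h2 : f * u ∈ Ideal.span T := hItQ hfu
    rw [hug] at h2
    exact mem_span_of_mul_monomial T d hTd h2
  -- span {v} ≤ Q
  have hvQ : Ideal.span {v} ≤ Ideal.span T := by
    apply Ideal.span_mono
    intro x hx
    exact Or.inr hx
  -- J^t ≤ colon
  have hJtcolon : J ^ t ≤ (I ^ t).colon (Ideal.span {u}) := by
    intro x hx
    rw [Submodule.mem_colon]
    intro p hp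
    rw [smul_eq_mul]
    exact Ideal.mul_mem_right p _ (Ideal.pow_right_mono hJI t hx)
  -- conclude
  apply le_antisymm
  · rw [Ideal.add_eq_sup]
    refine sup_le (le_trans hcolon ?_) (le_trans hvQ ?_) <;> rw [hQ]
  · rw [Ideal.add_eq_sup, Ideal.add_eq_sup]
    exact sup_le (le_trans hJtcolon le_sup_left) le_sup_right
end

section
/- Let K be a field, integers n ≥ m ≥ 1 and t ≥ 2. Then sdepth(S/I_{n,m}^t) ≤ sdepth(S/I_{n,m}^{t-1}). -/
open MvPolynomial

/-- `a` lies in the "cone" `u·K[Z]`, where `u` is the monomial with exponent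
vector `c`: i.e. `a = c + e` for some exponent vector `e` supported in `Z`. -/
def inCone {N : ℕ} (c : Fin N →₀ ℕ) (Z : Finset (Fin N)) (a : Fin N →₀ ℕ) : Prop :=
  ∃ e : Fin N →₀ ℕ, (e.support : Set (Fin N)) ⊆ (Z : Set (Fin N)) ∧ a = c + e

/-- A Stanley decomposition of a set `A` of exponent vectors (the exponents of the
monomial `K`-basis of a `ℤ^N`-graded module of the form `J/I` with `I ⊆ J`
monomial ideals): a finite family of cones `u_i K[Z_i]`, each contained in `A`,
which partition `A` (each element of `A` lies in exactly one cone). -/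
def IsStanleyDecomp {N : ℕ} (A : Set (Fin N →₀ ℕ))
    (D : Finset ((Fin N →₀ ℕ) × Finset (Fin N))) : Prop :=
  (∀ p ∈ D, ∀ a, inCone p.1 p.2 a → a ∈ A) ∧
  (∀ a ∈ A, ∃! p, p ∈ D ∧ inCone p.1 p.2 a)

/-- The Stanley depth of (the `ℤ^N`-graded module whose monomial basis is) `A`:
the largest `k` for which some Stanley decomposition `⊕ u_i K[Z_i]` of `A`
satisfies `|Z_i| ≥ k` for all `i`. -/
noncomputable def sdepthSet {N : ℕ} (A : Set (Fin N →₀ ℕ)) : ℕ :=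
  sSup { k | ∃ D, IsStanleyDecomp A D ∧ ∀ p ∈ D, k ≤ p.2.card }

/-- The Stanley depth of `S/I`, `I` a monomial ideal: the monomial basis of `S/I`
consists of the monomials not in `I`. -/
noncomputable def sdepthQuot (K : Type*) [Field K] {N : ℕ}
    (I : Ideal (MvPolynomial (Fin N) K)) : ℕ :=
  sdepthSet { c | (monomial c (1 : K) : MvPolynomial (Fin N) K) ∉ I }

/-- The Stanley depth of a monomial ideal `I` (as a `ℤ^N`-graded module): the
monomial basis of `I` consists of the monomials belonging to `I`. -/
noncomputable def sdepthIdeal (K : Type*) [Field K] {N : ℕ}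
    (I : Ideal (MvPolynomial (Fin N) K)) : ℕ :=
  sdepthSet { c | (monomial c (1 : K) : MvPolynomial (Fin N) K) ∈ I }

-- exponent vector of x_k
noncomputable def xe (N k : ℕ) : Fin N →₀ ℕ :=
  if h : k < N then Finsupp.single ⟨k, h⟩ 1 else 0

lemma Xv_eq_monomial (K : Type*) [Field K] (N k : ℕ) :
    Xv K N k = monomial (xe N k) 1 := by
  unfold Xv xe
  split
  · rw [X]
  · simp

-- gen vector
noncomputable def genV (N m i : ℕ) : Fin N →₀ ℕ := ∑ j ∈ Finset.range m, xe N (i + j)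

lemma prod_Xv (K : Type*) [Field K] (N m i : ℕ) :
    ∏ j ∈ Finset.range m, Xv K N (i + j) = monomial (genV N m i) 1 := by
  unfold genV
  induction m with
  | zero => simp
  | succ m ih =>
    rw [Finset.prod_range_succ, Finset.sum_range_succ, ih, Xv_eq_monomial,
      monomial_mul, one_mul]

lemma genV_apply (N m i : ℕ) (h : i + m ≤ N) (k : Fin N) :
    genV N m i k = if i ≤ k.val ∧ k.val < i + m then 1 else 0 := by
  unfold genV
  rw [Finset.sum_apply']
  have hx : ∀ j ∈ Finset.range m, xe N (i + j) k = if i + j = k.val then 1 else 0 := by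
    intro j hj
    have hjm : j < m := Finset.mem_range.mp hj
    have hlt : i + j < N := by omega
    unfold xe
    rw [dif_pos hlt, Finsupp.single_apply]
    congr 1
    simp only [Fin.ext_iff]
  rw [Finset.sum_congr rfl hx]
  by_cases hk : i ≤ k.val ∧ k.val < i + m
  · rw [if_pos hk, Finset.sum_eq_single (k.val - i)]
    · rw [if_pos (by omega)]
    · intro j hj hne
      rw [if_neg (by omega)]
    · intro hmem
      exact absurd (Finset.mem_range.mpr (by omega)) hmem
  · rw [if_neg hk, Finset.sum_eq_zero]
    intro j hj
    have := Finset.mem_range.mp hj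
    rw [if_neg (by omega)]

def GenSet (N n m : ℕ) : Set (Fin N →₀ ℕ) := { d | ∃ i : ℕ, i + m ≤ n ∧ d = genV N m i }

def SumsSet (N n m t : ℕ) : Set (Fin N →₀ ℕ) :=
  { d | ∃ M : Multiset (Fin N →₀ ℕ), M.card = t ∧ (∀ x ∈ M, x ∈ GenSet N n m) ∧ M.sum = d }

lemma pathIdeal_eq_span (K : Type*) [Field K] (N n m : ℕ) :
    pathIdeal K N n m = Ideal.span ((fun d => monomial d (1 : K)) '' GenSet N n m) := by
  unfold pathIdeal
  congr 1
  ext p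
  constructor
  · rintro ⟨i, hi, rfl⟩
    exact ⟨genV N m i, ⟨i, hi, rfl⟩, (prod_Xv K N m i).symm⟩
  · rintro ⟨d, ⟨i, hi, rfl⟩, rfl⟩
    exact ⟨i, hi, (prod_Xv K N m i).symm⟩

lemma span_image_pow (K : Type*) [Field K] (N n m : ℕ) (t : ℕ) :
    (Ideal.span ((fun d => monomial d (1 : K)) '' GenSet N n m)) ^ t =
      Ideal.span ((fun d => monomial d (1 : K)) '' SumsSet N n m t) := by
  induction t with
  | zero =>
    rw [pow_zero]
    have h0 : SumsSet N n m 0 = {0} := by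
      ext d
      constructor
      · rintro ⟨M, hc, _, rfl⟩
        rw [Multiset.card_eq_zero] at hc
        simp [hc]
      · rintro rfl
        exact ⟨0, rfl, by simp, rfl⟩
    rw [h0]
    simp only [Set.image_singleton, monomial_zero', C_1]
    rw [Ideal.span_singleton_one, Ideal.one_eq_top]
  | succ t ih =>
    rw [pow_succ, ih, Ideal.span_mul_span']
    congr 1
    ext p
    constructor
    · rintro ⟨q, ⟨a, ⟨M, hc, hg, rfl⟩, rfl⟩, r, ⟨b, hb, rfl⟩, rfl⟩
      refine ⟨M.sum + b, ⟨b ::ₘ M, ?_, ?_, ?_⟩, ?_⟩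
      · simp [hc]
      · intro x hx
        rcases Multiset.mem_cons.mp hx with rfl | hx
        · exact hb
        · exact hg x hx
      · rw [Multiset.sum_cons, add_comm]
      · simp only []
        rw [monomial_mul, one_mul]
    · rintro ⟨d, ⟨M, hc, hg, rfl⟩, rfl⟩
      have hM : M ≠ 0 := by
        intro h; rw [h] at hc; simp at hc
      obtain ⟨b, hb⟩ := Multiset.exists_mem_of_ne_zero hM
      obtain ⟨M', rfl⟩ : ∃ M', M = b ::ₘ M' := ⟨M.erase b, (Multiset.cons_erase hb).symm⟩
      refine ⟨monomial M'.sum 1, ⟨M'.sum, ⟨M', ?_, ?_, rfl⟩, rfl⟩,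
        monomial b 1, ⟨b, hg b (Multiset.mem_cons_self _ _), rfl⟩, ?_⟩
      · simpa using hc
      · intro x hx; exact hg x (Multiset.mem_cons_of_mem hx)
      · simp only []
        rw [monomial_mul, one_mul, Multiset.sum_cons, add_comm]

lemma monomial_mem_pow_iff (K : Type*) [Field K] (N n m t : ℕ) (c : Fin N →₀ ℕ) :
    (monomial c (1 : K)) ∈ (pathIdeal K N n m) ^ t ↔ ∃ d ∈ SumsSet N n m t, d ≤ c := by
  rw [pathIdeal_eq_span, span_image_pow, mem_ideal_span_monomial_image]
  classical
  rw [support_monomial, if_neg (one_ne_zero)]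
  simp

lemma multiset_sum_apply_ne_zero {N : ℕ} (M : Multiset (Fin N →₀ ℕ)) (k : Fin N)
    (h : M.sum k ≠ 0) : ∃ b ∈ M, b k ≠ 0 := by
  induction M using Multiset.induction_on with
  | empty => simp at h
  | cons a M ih =>
    rw [Multiset.sum_cons, Finsupp.add_apply] at h
    by_cases ha : a k = 0
    · obtain ⟨b, hb, hbk⟩ := ih (by omega)
      exact ⟨b, Multiset.mem_cons_of_mem hb, hbk⟩
    · exact ⟨a, Multiset.mem_cons_self _ _, ha⟩

lemma mem_pow_add_g (K : Type*) [Field K] (n m s : ℕ) (hm : 1 ≤ m) (hmn : m ≤ n)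
    (c : Fin n →₀ ℕ)
    (h : (monomial c (1 : K)) ∈ (pathIdeal K n n m) ^ s) :
    (monomial (c + genV n m (n - m)) (1 : K)) ∈ (pathIdeal K n n m) ^ (s + 1) := by
  rw [monomial_mem_pow_iff] at h ⊢
  obtain ⟨d, ⟨M, hc, hg, rfl⟩, hdc⟩ := h
  refine ⟨M.sum + genV n m (n - m), ⟨genV n m (n - m) ::ₘ M, by simp [hc], ?_, ?_⟩, ?_⟩
  · intro x hx
    rcases Multiset.mem_cons.mp hx with rfl | hx
    · exact ⟨n - m, by omega, rfl⟩
    · exact hg x hx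
  · rw [Multiset.sum_cons, add_comm]
  · exact add_le_add_left hdc _

lemma mem_pow_of_add_g (K : Type*) [Field K] (n m s : ℕ) (hm : 1 ≤ m) (hmn : m ≤ n)
    (c : Fin n →₀ ℕ)
    (h : (monomial (c + genV n m (n - m)) (1 : K)) ∈ (pathIdeal K n n m) ^ (s + 1)) :
    (monomial c (1 : K)) ∈ (pathIdeal K n n m) ^ s := by
  classical
  rw [monomial_mem_pow_iff] at h ⊢
  obtain ⟨d, ⟨M, hc, hg, rfl⟩, hdc⟩ := h
  set g := genV n m (n - m) with hgdef
  have hgk : ∀ k : Fin n, g k = if n - m ≤ k.val then 1 else 0 := by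
    intro k
    rw [hgdef, genV_apply n m (n - m) (by omega) k]
    have : k.val < n - m + m := by omega
    by_cases hk : n - m ≤ k.val
    · rw [if_pos ⟨hk, this⟩, if_pos hk]
    · rw [if_neg (by tauto), if_neg hk]
  have hle : ∀ k : Fin n, M.sum k ≤ c k + g k := by
    intro k
    have := Finsupp.le_def.mp hdc k
    rwa [Finsupp.add_apply] at this
  -- choose the generator to remove
  have hMne : M ≠ 0 := by
    intro h0; rw [h0] at hc; simp at hc
  set T : Finset (Fin n) := Finset.univ.filter (fun k => c k < M.sum k) with hT
  have key : ∃ b ∈ M, ∀ k ∈ T, 1 ≤ b k := by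
    by_cases hTne : T.Nonempty
    · set k0 := T.max' hTne with hk0
      have hk0T : k0 ∈ T := T.max'_mem hTne
      have hck0 : c k0 < M.sum k0 := by
        have := Finset.mem_filter.mp hk0T
        exact this.2
      obtain ⟨b, hbM, hbk⟩ := multiset_sum_apply_ne_zero M k0 (by omega)
      obtain ⟨i, him, hbi⟩ := hg b hbM
      have hbrange : i ≤ k0.val ∧ k0.val < i + m := by
        by_contra hcon
        rw [hbi, genV_apply n m i him k0, if_neg hcon] at hbk
        exact hbk rfl
      refine ⟨b, hbM, ?_⟩
      intro k hkT
      have hkle : k ≤ k0 := T.le_max' k hkT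
      have hck : c k < M.sum k := (Finset.mem_filter.mp hkT).2
      have hgk1 : n - m ≤ k.val := by
        by_contra hx
        have := hle k
        rw [hgk k, if_neg hx] at this
        omega
      have : i ≤ k.val ∧ k.val < i + m := by
        have := Fin.le_def.mp hkle
        omega
      rw [hbi, genV_apply n m i him k, if_pos this]
    · obtain ⟨b, hbM⟩ := Multiset.exists_mem_of_ne_zero hMne
      refine ⟨b, hbM, ?_⟩
      intro k hkT
      exact absurd (⟨k, hkT⟩ : T.Nonempty) hTne
  obtain ⟨b, hbM, hb1⟩ := key
  refine ⟨(M.erase b).sum, ⟨M.erase b, ?_, ?_, rfl⟩, ?_⟩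
  · rw [Multiset.card_erase_of_mem hbM, hc]; rfl
  · intro x hx; exact hg x (Multiset.mem_of_mem_erase hx)
  · -- (M.erase b).sum ≤ c
    have hsum : M.sum = b + (M.erase b).sum := by
      conv_lhs => rw [← Multiset.cons_erase hbM]
      rw [Multiset.sum_cons]
    rw [Finsupp.le_def]
    intro k
    have heq : M.sum k = b k + (M.erase b).sum k := by
      rw [hsum, Finsupp.add_apply]
    by_cases hkT : k ∈ T
    · have hck : c k < M.sum k := (Finset.mem_filter.mp hkT).2
      have hgle : g k ≤ 1 := by rw [hgk k]; split <;> omega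
      have := hle k
      have := hb1 k hkT
      omega
    · have : ¬ (c k < M.sum k) := by
        intro hx
        exact hkT (Finset.mem_filter.mpr ⟨Finset.mem_univ k, hx⟩)
      omega

lemma inCone_sub_iff {N : ℕ} (g c : Fin N →₀ ℕ) (Z : Finset (Fin N))
    (hP : ∀ i ∉ Z, g i ≤ c i) (a : Fin N →₀ ℕ) :
    inCone (c - g) Z a ↔ inCone c Z (a + g) := by
  constructor
  · rintro ⟨e, he, rfl⟩
    refine ⟨(g - c) + e, ?_, ?_⟩
    · refine Set.Subset.trans (Set.Subset.trans (Finset.coe_subset.mpr (Finsupp.support_add)) ?_)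
        (by rfl)
      rw [Finset.coe_union]
      apply Set.union_subset _ he
      intro i hi
      simp only [Finset.mem_coe, Finsupp.mem_support_iff, Finsupp.tsub_apply] at hi
      by_contra hiZ
      have := hP i hiZ
      omega
    · ext k
      simp only [Finsupp.add_apply, Finsupp.tsub_apply]
      omega
  · rintro ⟨e, he, heq⟩
    refine ⟨a - (c - g), ?_, ?_⟩
    · intro k hk
      simp only [Finset.mem_coe, Finsupp.mem_support_iff, Finsupp.tsub_apply] at hk
      by_contra hkZ
      have hek : e k = 0 := by
        by_contra hek
        exact hkZ (he (Finsupp.mem_support_iff.mpr hek))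
      have := Finsupp.ext_iff.mp heq k
      simp only [Finsupp.add_apply, hek] at this
      omega
    · ext k
      have := Finsupp.ext_iff.mp heq k
      simp only [Finsupp.add_apply] at this
      simp only [Finsupp.add_apply, Finsupp.tsub_apply]
      have hek : 0 ≤ e k := Nat.zero_le _
      omega

lemma sdepthSet_le_of_shift {N : ℕ} (g : Fin N →₀ ℕ) (A B : Set (Fin N →₀ ℕ))
    (hAB : ∀ a, a ∈ B ↔ a + g ∈ A) (hBne : B.Nonempty) :
    sdepthSet A ≤ sdepthSet B := by
  classical
  unfold sdepthSet
  set S := { k | ∃ D, IsStanleyDecomp A D ∧ ∀ p ∈ D, k ≤ p.2.card } with hS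
  set T := { k | ∃ D, IsStanleyDecomp B D ∧ ∀ p ∈ D, k ≤ p.2.card } with hT
  have hST : S ⊆ T := by
    rintro k ⟨D, ⟨hsound, hpart⟩, hcard⟩
    set D' : Finset ((Fin N →₀ ℕ) × Finset (Fin N)) :=
      (D.filter (fun p => ∀ i ∉ p.2, g i ≤ p.1 i)).image (fun p => (p.1 - g, p.2)) with hD'
    refine ⟨D', ⟨?_, ?_⟩, ?_⟩
    · rintro p' hp' a ha
      obtain ⟨p, hp, rfl⟩ := Finset.mem_image.mp hp'
      obtain ⟨hpD, hpP⟩ := Finset.mem_filter.mp hp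
      rw [hAB]
      exact hsound p hpD (a + g) ((inCone_sub_iff g p.1 p.2 hpP a).mp ha)
    · intro a haB
      obtain ⟨p, ⟨hpD, hpC⟩, huniq⟩ := hpart (a + g) ((hAB a).mp haB)
      have hpP : ∀ i ∉ p.2, g i ≤ p.1 i := by
        intro i hi
        obtain ⟨e, he, heq⟩ := hpC
        have hei : e i = 0 := by
          by_contra hei
          exact hi (he (Finsupp.mem_support_iff.mpr hei))
        have := Finsupp.ext_iff.mp heq i
        simp only [Finsupp.add_apply, hei] at this
        omega
      refine ⟨(p.1 - g, p.2), ⟨Finset.mem_image.mpr ⟨p, Finset.mem_filter.mpr ⟨hpD, hpP⟩, rfl⟩, ?_⟩, ?_⟩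
      · exact (inCone_sub_iff g p.1 p.2 hpP a).mpr hpC
      · rintro q' ⟨hq'D, hq'C⟩
        obtain ⟨q, hq, rfl⟩ := Finset.mem_image.mp hq'D
        obtain ⟨hqD, hqP⟩ := Finset.mem_filter.mp hq
        have : q = p := huniq q ⟨hqD, (inCone_sub_iff g q.1 q.2 hqP a).mp hq'C⟩
        rw [this]
    · rintro p' hp'
      obtain ⟨p, hp, rfl⟩ := Finset.mem_image.mp hp'
      exact hcard p (Finset.mem_filter.mp hp).1
  rcases Set.eq_empty_or_nonempty S with hSe | hSne
  · rw [hSe, csSup_empty]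
    exact Nat.zero_le _
  · apply csSup_le_csSup _ hSne hST
    refine ⟨N, ?_⟩
    rintro k ⟨D, ⟨hsound, hpart⟩, hcard⟩
    obtain ⟨b, hb⟩ := hBne
    obtain ⟨p, ⟨hpD, _⟩, _⟩ := hpart b hb
    calc k ≤ p.2.card := hcard p hpD
      _ ≤ (Finset.univ : Finset (Fin N)).card := Finset.card_le_univ _
      _ = N := by simp

/-- **(2.9) in Proposition 2.3.** Let `K` be a field, `n ≥ m ≥ 1`, `t ≥ 2`. Then
`sdepth(S/I_{n,m}^t) ≤ sdepth(S/I_{n,m}^{t-1})`. -/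
theorem sdepth_quot_pathIdeal_pow_antitone (K : Type*) [Field K] (n m t : ℕ)
    (hm : 1 ≤ m) (hmn : m ≤ n) (ht : 2 ≤ t) :
    sdepthQuot K (pathIdeal K n n m ^ t) ≤
      sdepthQuot K (pathIdeal K n n m ^ (t - 1)) := by
  obtain ⟨s, rfl⟩ : ∃ s, t = s + 1 := ⟨t - 1, by omega⟩
  have hs : 1 ≤ s := by omega
  simp only [Nat.add_sub_cancel]
  unfold sdepthQuot
  apply sdepthSet_le_of_shift (genV n m (n - m))
  · intro a
    constructor
    · intro haB haI
      exact haB (mem_pow_of_add_g K n m s hm hmn a haI)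
    · intro hI haI
      exact hI (mem_pow_add_g K n m s hm hmn a haI)
  · refine ⟨0, ?_⟩
    intro h0
    rw [monomial_mem_pow_iff] at h0
    obtain ⟨d, ⟨M, hc, hg, rfl⟩, hd0⟩ := h0
    have hMne : M ≠ 0 := by
      intro h0'; rw [h0'] at hc; simp at hc; omega
    obtain ⟨b, hbM⟩ := Multiset.exists_mem_of_ne_zero hMne
    obtain ⟨i, him, rfl⟩ := hg b hbM
    have hik : i < n := by omega
    have hb1 : genV n m i ⟨i, hik⟩ = 1 := by
      rw [genV_apply n m i him]
      rw [if_pos (by simp only [Fin.val_mk]; omega)]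
    have hsum : M.sum = genV n m i + (M.erase (genV n m i)).sum := by
      conv_lhs => rw [← Multiset.cons_erase hbM]
      rw [Multiset.sum_cons]
    have := Finsupp.le_def.mp hd0 ⟨i, hik⟩
    rw [hsum, Finsupp.add_apply, hb1] at this
    simp at this
end

section
/- Let K be a field and t, m ≥ 2 integers. Then sdepth(U_{m,t}) ≥ t + m − (t + m − m⌈t/m⌉)·⌊(⌈t/m⌉ + 1)/2⌋ − (m⌈t/m⌉ − t)·⌊⌈t/m⌉/2⌋. -/
open MvPolynomial

/-- `Umt K N m t` is the monomial ideal `U_{m,t}` of `K[x_1,…,x_{t+m}]` (regarded in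
the ambient ring `K[x_1,…,x_N]`) generated by all squarefree monomials
`x_{i_1} x_{i_2} ⋯ x_{i_m}` with `1 ≤ i_1 < i_2 < … < i_m ≤ t + m` and
`i_j ≡ j (mod m)` for `1 ≤ j ≤ m`. -/
noncomputable def Umt (K : Type*) [Field K] (N m t : ℕ) :
    Ideal (MvPolynomial (Fin N) K) :=
  Ideal.span { p | ∃ f : Fin m → ℕ, StrictMono f ∧
    (∀ j, 1 ≤ f j ∧ f j ≤ t + m) ∧ (∀ j : Fin m, f j % m = (j.1 + 1) % m) ∧
    p = ∏ j, Xv K N (f j - 1) }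

namespace UmtProof

/-- chain condition: `g` weakly increasing on `[0,m)` with positions `j + m * g j < N`. -/
def IsChainN (m N : ℕ) (g : ℕ → ℕ) : Prop :=
  (∀ j, j + 1 < m → g j ≤ g (j + 1)) ∧ (∀ j, j < m → j + m * g j < N)

variable {m N : ℕ}

lemma chain_mono {g : ℕ → ℕ} (hc : IsChainN m N g) :
    ∀ {i j : ℕ}, i ≤ j → j < m → g i ≤ g j := by
  intro i j hij hj
  induction j with
  | zero => simp [Nat.le_zero.mp hij]
  | succ n ih =>
    rcases Nat.lt_or_ge i (n + 1) with h | h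
    · exact le_trans (ih (by omega) (by omega)) (hc.1 n hj)
    · have : i = n + 1 := by omega
      subst this; rfl


/-- Indicator exponent vector of the chain positions of `g`. -/
noncomputable def Sg (m : ℕ) {N : ℕ} (g : ℕ → ℕ) : Fin N →₀ ℕ :=
  Finsupp.onFinset Finset.univ (fun k => if k.1 / m = g (k.1 % m) then 1 else 0)
    (fun a _ => Finset.mem_univ a)

lemma Sg_apply (g : ℕ → ℕ) (k : Fin N) :
    Sg m g k = if k.1 / m = g (k.1 % m) then 1 else 0 := rfl

def lowerB (g : ℕ → ℕ) (j : ℕ) : ℕ := if j = 0 then 0 else g (j - 1)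

/-- `k` is a forbidden position for the greedy cone of `g`. -/
def Forb (m : ℕ) {N : ℕ} (g : ℕ → ℕ) (k : Fin N) : Prop :=
  lowerB g (k.1 % m) ≤ k.1 / m ∧ k.1 / m < g (k.1 % m)

instance (g : ℕ → ℕ) (k : Fin N) : Decidable (Forb m g k) := by
  unfold Forb; infer_instance

/-- The free-variable set of the greedy cone of `g`. -/
noncomputable def Tg (m : ℕ) {N : ℕ} (g : ℕ → ℕ) : Finset (Fin N) :=
  Finset.univ.filter (fun k => ¬ Forb m g k)

lemma mem_Tg {g : ℕ → ℕ} {k : Fin N} : k ∈ Tg m g ↔ ¬ Forb m g k := by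
  simp [Tg]

lemma pos_mod {j a : ℕ} (hj : j < m) : (j + m * a) % m = j := by
  rw [Nat.add_mul_mod_self_left, Nat.mod_eq_of_lt hj]

lemma pos_div {j a : ℕ} (hj : j < m) : (j + m * a) / m = a := by
  rw [Nat.add_mul_div_left _ _ (by omega : 0 < m), Nat.div_eq_of_lt hj, Nat.zero_add]

lemma Sg_apply_pos {g : ℕ → ℕ} {j : ℕ} (hj : j < m) (hlt : j + m * g j < N) :
    Sg m g (⟨j + m * g j, hlt⟩ : Fin N) = 1 := by
  rw [Sg_apply]; simp [pos_div hj, pos_mod hj]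

lemma hits_of_Sg_le {g : ℕ → ℕ} {e : Fin N →₀ ℕ} (hle : Sg m g ≤ e)
    {j : ℕ} (hj : j < m) (hlt : j + m * g j < N) :
    1 ≤ e (⟨j + m * g j, hlt⟩ : Fin N) := by
  have := Finsupp.le_def.mp hle (⟨j + m * g j, hlt⟩ : Fin N)
  rwa [Sg_apply_pos hj hlt] at this

lemma Sg_le_of_hits (hm : 0 < m) {g : ℕ → ℕ} {e : Fin N →₀ ℕ} (hg : IsChainN m N g)
    (hhit : ∀ j (hj : j < m), 1 ≤ e (⟨j + m * g j, hg.2 j hj⟩ : Fin N)) :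
    Sg m g ≤ e := by
  rw [Finsupp.le_def]
  intro k
  rw [Sg_apply]
  split
  · next h =>
    have hjm : k.1 % m < m := Nat.mod_lt _ hm
    have hk : k = (⟨k.1 % m + m * g (k.1 % m), hg.2 _ hjm⟩ : Fin N) := by
      apply Fin.ext; simp only [← h, Nat.mod_add_div]
    rw [hk]; exact hhit _ hjm
  · exact Nat.zero_le _

lemma Sg_congr {g g' : ℕ → ℕ} (hm : 0 < m) (h : ∀ j, j < m → g j = g' j) :
    (Sg m g : Fin N →₀ ℕ) = Sg m g' := by
  ext k; rw [Sg_apply, Sg_apply, h _ (Nat.mod_lt _ hm)]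

lemma Forb_congr {g g' : ℕ → ℕ} (hm : 0 < m) (h : ∀ j, j < m → g j = g' j) (k : Fin N) :
    Forb m g k ↔ Forb m g' k := by
  have h1 : g (k.1 % m) = g' (k.1 % m) := h _ (Nat.mod_lt _ hm)
  have h2 : lowerB g (k.1 % m) = lowerB g' (k.1 % m) := by
    unfold lowerB; split
    · rfl
    · exact h _ (by have := Nat.mod_lt k.1 hm; omega)
  unfold Forb; rw [h1, h2]

lemma Tg_congr {g g' : ℕ → ℕ} (hm : 0 < m) (h : ∀ j, j < m → g j = g' j) :
    (Tg m g : Finset (Fin N)) = Tg m g' := by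
  ext k; rw [mem_Tg, mem_Tg, Forb_congr hm h]

lemma IsChainN_congr {g g' : ℕ → ℕ} (h : ∀ j, j < m → g j = g' j) (hg : IsChainN m N g) :
    IsChainN m N g' := by
  constructor
  · intro j hj; rw [← h j (by omega), ← h (j+1) hj]; exact hg.1 j hj
  · intro j hj; rw [← h j hj]; exact hg.2 j hj


lemma mem_cone_iff {g : ℕ → ℕ} (e : Fin N →₀ ℕ) :
    inCone (Sg m g) (Tg m g) e ↔ Sg m g ≤ e ∧ ∀ k : Fin N, Forb m g k → e k = 0 := by
  constructor
  · rintro ⟨e', hsupp, rfl⟩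
    constructor
    · exact le_add_right le_rfl
    · intro k hk
      have h1 : Sg m g k = 0 := by
        rw [Sg_apply, if_neg (Nat.ne_of_lt hk.2)]
      have h2 : e' k = 0 := by
        by_contra h
        exact (mem_Tg.mp (hsupp (Finsupp.mem_support_iff.mpr h))) hk
      simp [Finsupp.add_apply, h1, h2]
  · rintro ⟨hle, hmin⟩
    refine ⟨e - Sg m g, ?_, (add_tsub_cancel_of_le hle).symm⟩
    intro k hk
    rw [Finset.mem_coe] at hk ⊢
    rw [mem_Tg]
    intro hforb
    have h0 : ((e - Sg m g : Fin N →₀ ℕ)) k = 0 := by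
      rw [Finsupp.tsub_apply e (Sg m g) k, hmin k hforb]; exact Nat.zero_sub _
    exact Finsupp.mem_support_iff.mp hk h0


lemma greedy_le (hm : 0 < m) {e : Fin N →₀ ℕ} {g g' : ℕ → ℕ} {j : ℕ}
    (hg : IsChainN m N g) (hle : Sg m g ≤ e)
    (hmin' : ∀ k : Fin N, Forb m g' k → e k = 0)
    (hagree : ∀ i, i < j → g i = g' i) (hj : j < m) : g' j ≤ g j := by
  by_contra hlt
  push_neg at hlt
  set k : Fin N := ⟨j + m * g j, hg.2 j hj⟩ with hk
  have hkm : k.1 % m = j := pos_mod hj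
  have hkd : k.1 / m = g j := pos_div hj
  have hforb : Forb m g' k := by
    refine ⟨?_, by rw [hkd, hkm]; exact hlt⟩
    rw [hkm, hkd]
    unfold lowerB
    split
    · exact Nat.zero_le _
    · next h0 =>
      rw [← hagree (j-1) (by omega)]
      have := hg.1 (j-1) (by omega)
      have hj1 : j - 1 + 1 = j := by omega
      rw [hj1] at this
      exact this
  have h1 : 1 ≤ e k := hits_of_Sg_le hle hj (hg.2 j hj)
  rw [hmin' k hforb] at h1
  omega

lemma greedy_unique (hm : 0 < m) {e : Fin N →₀ ℕ} {g g' : ℕ → ℕ}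
    (hg : IsChainN m N g) (hg' : IsChainN m N g')
    (hle : Sg m g ≤ e) (hmin : ∀ k : Fin N, Forb m g k → e k = 0)
    (hle' : Sg m g' ≤ e) (hmin' : ∀ k : Fin N, Forb m g' k → e k = 0) :
    ∀ j, j < m → g j = g' j := by
  intro j
  induction j using Nat.strong_induction_on with
  | _ j ih =>
    intro hj
    have h1 := greedy_le hm hg hle hmin' (fun i hi => ih i hi (by omega)) hj
    have h2 := greedy_le hm hg' hle' hmin (fun i hi => (ih i hi (by omega)).symm) hj
    omega

lemma greedy_exists (hm : 0 < m) {e : Fin N →₀ ℕ} {h : ℕ → ℕ}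
    (hh : IsChainN m N h) (hhe : Sg m h ≤ e) :
    ∃ g, IsChainN m N g ∧ Sg m g ≤ e ∧ (∀ k : Fin N, Forb m g k → e k = 0) := by
  classical
  have main : ∀ n, ∃ g, IsChainN m N g ∧ Sg m g ≤ e ∧
      (∀ j, n ≤ j → j < m → g j = h j) ∧
      (∀ k : Fin N, k.1 % m < n → Forb m g k → e k = 0) := by
    intro n
    induction n with
    | zero => exact ⟨h, hh, hhe, fun _ _ _ => rfl, fun k hk => absurd hk (Nat.not_lt_zero _)⟩
    | succ n ihn =>
      obtain ⟨g, hg, hge, hgh, hgmin⟩ := ihn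
      rcases Nat.lt_or_ge n m with hnm | hnm
      swap
      · -- n ≥ m : nothing to do
        refine ⟨g, hg, hge, fun j h1 h2 => hgh j (by omega) h2, fun k hk => ?_⟩
        exact hgmin k (lt_of_lt_of_le (Nat.mod_lt _ hm) hnm)
      -- define the n-th greedy value
      have hlow : lowerB g n ≤ g n := by
        unfold lowerB
        split
        · exact Nat.zero_le _
        · next h0 =>
          have := hg.1 (n-1) (by omega)
          have hn1 : n - 1 + 1 = n := by omega
          rwa [hn1] at this
      have hQ : ∃ a, lowerB g n ≤ a ∧ ∃ hk : n + m * a < N,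
          1 ≤ e (⟨n + m * a, hk⟩ : Fin N) :=
        ⟨g n, hlow, hg.2 n hnm, hits_of_Sg_le hge hnm (hg.2 n hnm)⟩
      obtain ⟨hbl, hbN, hbe⟩ := Nat.find_spec hQ
      have hbg : Nat.find hQ ≤ g n := Nat.find_min' hQ ⟨hlow, hg.2 n hnm, hits_of_Sg_le hge hnm (hg.2 n hnm)⟩
      set g' : ℕ → ℕ := Function.update g n (Nat.find hQ) with hg'def
      have hg'n : g' n = Nat.find hQ := Function.update_self n (Nat.find hQ) g
      have hg'o : ∀ j, j ≠ n → g' j = g j := fun j hj => Function.update_of_ne hj (Nat.find hQ) g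
      have hchain' : IsChainN m N g' := by
        constructor
        · intro j hj
          rcases eq_or_ne j n with rfl | hjn
          · rw [hg'n, hg'o (j+1) (by omega)]
            exact le_trans hbg (hg.1 j hj)
          · rcases eq_or_ne (j+1) n with hj1 | hj1
            · rw [hg'o j hjn]
              have h2 : g' (j+1) = Nat.find hQ := by rw [hj1]; exact hg'n
              rw [h2]
              have h3 : lowerB g n = g j := by
                unfold lowerB; rw [if_neg (by omega)]; congr 1; omega
              rw [← h3]; exact hbl
            · rw [hg'o j hjn, hg'o (j+1) hj1]; exact hg.1 j hj
        · intro j hj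
          rcases eq_or_ne j n with rfl | hjn
          · rw [hg'n]; exact hbN
          · rw [hg'o j hjn]; exact hg.2 j hj
      refine ⟨g', hchain', ?_, ?_, ?_⟩
      · apply Sg_le_of_hits hm hchain'
        intro j hj
        rcases eq_or_ne j n with rfl | hjn
        · have hkeq : (⟨j + m * g' j, hchain'.2 j hj⟩ : Fin N) = ⟨j + m * Nat.find hQ, hbN⟩ := by
            apply Fin.ext; simp [hg'n]
          rw [hkeq]; exact hbe
        · have hkeq : (⟨j + m * g' j, hchain'.2 j hj⟩ : Fin N) = ⟨j + m * g j, hg.2 j hj⟩ := by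
            apply Fin.ext; simp [hg'o j hjn]
          rw [hkeq]; exact hits_of_Sg_le hge hj (hg.2 j hj)
      · intro j h1 h2
        rw [hg'o j (by omega)]
        exact hgh j (by omega) h2
      · intro k hk hforb
        rcases Nat.lt_or_ge (k.1 % m) n with hkn | hkn
        · apply hgmin k hkn
          have hco : ∀ i, i < m → g' i = g i → True := fun _ _ _ => trivial
          -- Forb g' k → Forb g k since g', g agree at k%m and k%m - 1 (both < n ≤ values ≠ n? careful)
          obtain ⟨hf1, hf2⟩ := hforb
          refine ⟨?_, ?_⟩
          · have : lowerB g' (k.1 % m) = lowerB g (k.1 % m) := by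
              unfold lowerB; split
              · rfl
              · exact hg'o _ (by omega)
            rwa [this] at hf1
          · rwa [hg'o _ (by omega)] at hf2
        · -- k % m = n
          have hkmn : k.1 % m = n := by omega
          obtain ⟨hf1, hf2⟩ := hforb
          rw [hkmn, hg'n] at hf2
          have hlow' : lowerB g' (k.1 % m) = lowerB g (k.1 % m) := by
            unfold lowerB; split
            · rfl
            · exact hg'o _ (by omega)
          rw [hlow', hkmn] at hf1
          -- k.1/m fails the find predicate
          have hnotQ := Nat.find_min hQ (m := k.1 / m) hf2
          push_neg at hnotQ
          have hkeq : k = (⟨n + m * (k.1 / m), by rw [← hkmn, Nat.mod_add_div]; exact k.2⟩ : Fin N) := by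
            apply Fin.ext
            simp only [← hkmn, Nat.mod_add_div]
          have := hnotQ hf1 (by rw [← hkmn, Nat.mod_add_div]; exact k.2)
          rw [hkeq]
          omega
  obtain ⟨g, h1, h2, _, h4⟩ := main m
  exact ⟨g, h1, h2, fun k => h4 k (Nat.mod_lt _ hm)⟩


lemma Forb_card_le (hm : 0 < m) {g : ℕ → ℕ} (hg : IsChainN m N g) :
    (Finset.univ.filter (fun k : Fin N => Forb m g k)).card ≤ g (m - 1) := by
  have hmaps : ∀ k ∈ Finset.univ.filter (fun k : Fin N => Forb m g k),
      k.1 / m ∈ Finset.range (g (m-1)) := by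
    intro k hk
    rw [Finset.mem_filter] at hk
    rw [Finset.mem_range]
    have h2 := hk.2.2
    have hmod : k.1 % m < m := Nat.mod_lt _ hm
    exact lt_of_lt_of_le h2 (chain_mono hg (by omega) (by omega))
  have haux : ∀ k k' : Fin N, Forb m g k → Forb m g k' → k.1 % m < k'.1 % m →
      k.1 / m = k'.1 / m → False := by
    intro k k' hf hf' hlt hdiv
    have h1 : k.1 / m < g (k.1 % m) := hf.2
    have h2 : lowerB g (k'.1 % m) ≤ k'.1 / m := hf'.1
    have h3 : lowerB g (k'.1 % m) = g (k'.1 % m - 1) := by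
      unfold lowerB; rw [if_neg (by omega)]
    have hmod' : k'.1 % m < m := Nat.mod_lt _ hm
    have h4 : g (k.1 % m) ≤ g (k'.1 % m - 1) := chain_mono hg (by omega) (by omega)
    omega
  apply le_trans (Finset.card_le_card_of_injOn (fun k => k.1 / m) (fun k hk => hmaps k (Finset.mem_coe.mp hk)) ?_)
  · simp
  · intro k hk k' hk' hdiv0
    have hdiv : k.1 / m = k'.1 / m := hdiv0
    rw [Finset.coe_filter] at hk hk'
    simp only [Set.mem_setOf_eq] at hk hk'
    rcases Nat.lt_trichotomy (k.1 % m) (k'.1 % m) with h | h | h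
    · exact absurd (haux k k' hk.2 hk'.2 h hdiv) not_false
    · apply Fin.ext
      have e1 : k.1 = m * (k.1 / m) + k.1 % m := (Nat.div_add_mod _ _).symm
      have e2 : k'.1 = m * (k'.1 / m) + k'.1 % m := (Nat.div_add_mod _ _).symm
      rw [e1, e2, h, hdiv]
    · exact absurd (haux k' k hk'.2 hk.2 h hdiv.symm) not_false

lemma Tg_card_ge (hm : 0 < m) {g : ℕ → ℕ} (hg : IsChainN m N g) :
    N - g (m - 1) ≤ (Tg m g : Finset (Fin N)).card := by
  have h1 := Finset.card_filter_add_card_filter_not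
    (s := (Finset.univ : Finset (Fin N))) (p := fun k => Forb m g k)
  rw [Finset.card_univ, Fintype.card_fin] at h1
  have h2 := Forb_card_le hm hg
  have h3 : (Tg m g : Finset (Fin N)).card =
      (Finset.univ.filter (fun k : Fin N => ¬ Forb m g k)).card := rfl
  omega


lemma sum_single_eq_Sg (hm : 0 < m) {g : ℕ → ℕ} (hg : IsChainN m N g) :
    (∑ j : Fin m, Finsupp.single (⟨j.1 + m * g j.1, hg.2 j.1 j.2⟩ : Fin N) (1 : ℕ))
      = Sg m g := by
  ext k
  rw [Finsupp.finset_sum_apply, Sg_apply]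
  split
  · next h =>
    have hjm : k.1 % m < m := Nat.mod_lt _ hm
    have hkey : ∀ j : Fin m,
        Finsupp.single (⟨j.1 + m * g j.1, hg.2 j.1 j.2⟩ : Fin N) (1 : ℕ) k
          = if j = (⟨k.1 % m, hjm⟩ : Fin m) then 1 else 0 := by
      intro j
      rw [Finsupp.single_apply]
      congr 1
      apply propext
      constructor
      · intro hjk
        have : (j.1 + m * g j.1) = k.1 := congrArg Fin.val hjk
        apply Fin.ext
        simp only [← this, pos_mod j.2]
      · rintro rfl
        apply Fin.ext
        simp only [← h, Nat.mod_add_div]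
    simp only [hkey]
    rw [Finset.sum_ite_eq' Finset.univ (⟨k.1 % m, hjm⟩ : Fin m) (fun _ => 1)]
    simp
  · next h =>
    apply Finset.sum_eq_zero
    intro j _
    rw [Finsupp.single_apply, if_neg]
    intro hjk
    have hv : (j.1 + m * g j.1) = k.1 := congrArg Fin.val hjk
    have h1 : k.1 % m = j.1 := by rw [← hv, pos_mod j.2]
    have h2 : k.1 / m = g j.1 := by rw [← hv, pos_div j.2]
    rw [h1] at h; rw [h2] at h; exact h rfl

lemma umt_eq_span (K : Type*) [Field K] (t m : ℕ) (hm : 2 ≤ m) :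
    Umt K (t+m) m t = Ideal.span ((fun c => monomial c (1:K)) ''
      {c : Fin (t+m) →₀ ℕ | ∃ g : ℕ → ℕ, IsChainN m (t+m) g ∧ c = Sg m g}) := by
  have hm0 : 0 < m := by omega
  unfold Umt
  congr 1
  ext p
  constructor
  · rintro ⟨f, hmono, hbd, hres, rfl⟩
    -- convert to chain
    have hkey : ∀ j : Fin m, f j - 1 = j.1 + m * ((f j - 1) / m) := by
      intro j
      have hq := (hbd j).1
      have hr := hres j
      -- show (f j - 1) % m = j
      have hmod : (f j - 1) % m = j.1 := by
        rcases Nat.lt_or_ge (j.1 + 1) m with hlt | hge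
        · rw [Nat.mod_eq_of_lt hlt] at hr
          have : f j = m * (f j / m) + (j.1 + 1) := by
            conv_lhs => rw [← Nat.div_add_mod (f j) m]
            rw [hr]
          have h2 : f j - 1 = m * (f j / m) + j.1 := by omega
          rw [h2, Nat.mul_add_mod, Nat.mod_eq_of_lt j.2]
        · have hj1 : j.1 + 1 = m := by omega
          rw [hj1, Nat.mod_self] at hr
          have hfm : f j = m * (f j / m) := by
            conv_lhs => rw [← Nat.div_add_mod (f j) m]
            rw [hr, Nat.add_zero]
          have hd1 : 1 ≤ f j / m := by
            rcases Nat.eq_zero_or_pos (f j / m) with h | h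
            · rw [h, Nat.mul_zero] at hfm; omega
            · exact h
          obtain ⟨d, hd⟩ := Nat.exists_eq_add_of_le hd1
          have : f j - 1 = m * d + (j.1) := by
            rw [hfm, hd]
            have : m * (1 + d) = m + m * d := by ring
            omega
          rw [this, Nat.mul_add_mod, Nat.mod_eq_of_lt j.2]
      conv_lhs => rw [← Nat.div_add_mod (f j - 1) m]
      rw [hmod]; ring
    set g : ℕ → ℕ := fun j => if h : j < m then (f ⟨j, h⟩ - 1) / m else 0 with hgdef
    have hgval : ∀ j : Fin m, f j - 1 = j.1 + m * g j.1 := by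
      intro j
      rw [hgdef]
      simp only [j.2, dif_pos]
      exact hkey j
    have hchain : IsChainN m (t+m) g := by
      constructor
      · intro j hj
        have hjm : j < m := by omega
        have h1 := hgval ⟨j, hjm⟩
        have h2 := hgval ⟨j+1, hj⟩
        have h3 : f ⟨j, hjm⟩ < f ⟨j+1, hj⟩ := hmono (Fin.mk_lt_mk.mpr (Nat.lt_succ_self j))
        have h4 : 1 ≤ f ⟨j, hjm⟩ := (hbd _).1
        have h5 : 1 ≤ f ⟨j+1, hj⟩ := (hbd _).1
        simp only [Fin.val_mk] at h1 h2
        have hA : j + m * g j < (j + 1) + m * g (j+1) := by omega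
        by_contra hc
        push_neg at hc
        have hc' : g (j+1) + 1 ≤ g j := hc
        have hmul := Nat.mul_le_mul_left m hc'
        have hmul2 : m * (g (j+1) + 1) = m * g (j+1) + m := by ring
        omega
      · intro j hj
        have h1 := hgval ⟨j, hj⟩
        have h2 := (hbd ⟨j, hj⟩).2
        have h4 : 1 ≤ f ⟨j, hj⟩ := (hbd _).1
        simp only [Fin.val_mk] at h1
        omega
    refine ⟨Sg m g, ⟨g, hchain, rfl⟩, ?_⟩
    beta_reduce
    rw [← sum_single_eq_Sg hm0 hchain, monomial_sum_one]
    apply Finset.prod_congr rfl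
    intro j _
    have hlt : f j - 1 < t + m := by
      have := (hbd j).2
      have := (hbd j).1
      omega
    unfold Xv
    rw [dif_pos hlt]
    have : (⟨f j - 1, hlt⟩ : Fin (t+m)) = ⟨j.1 + m * g j.1, hchain.2 j.1 j.2⟩ :=
      Fin.ext (hgval j)
    rw [this]
    rfl
  · rintro ⟨c, ⟨g, hchain, rfl⟩, rfl⟩
    refine ⟨fun j => j.1 + 1 + m * g j.1, ?_, ?_, ?_, ?_⟩
    · intro j j' hjj'
      have hj : j.1 < j'.1 := hjj'
      have h1 : g j.1 ≤ g j'.1 := chain_mono hchain (le_of_lt hj) j'.2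
      have h2 : m * g j.1 ≤ m * g j'.1 := Nat.mul_le_mul_left m h1
      show j.1 + 1 + m * g j.1 < j'.1 + 1 + m * g j'.1
      omega
    · intro j
      have := hchain.2 j.1 j.2
      show 1 ≤ j.1 + 1 + m * g j.1 ∧ j.1 + 1 + m * g j.1 ≤ t + m
      omega
    · intro j
      rw [Nat.add_mul_mod_self_left]
    · beta_reduce
      rw [← sum_single_eq_Sg hm0 hchain, monomial_sum_one]
      apply Finset.prod_congr rfl
      intro j _
      unfold Xv
      have hlt : j.1 + 1 + m * g j.1 - 1 < t + m := by
        have := hchain.2 j.1 j.2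
        omega
      rw [dif_pos hlt]
      have : (⟨j.1 + 1 + m * g j.1 - 1, hlt⟩ : Fin (t+m))
          = ⟨j.1 + m * g j.1, hchain.2 j.1 j.2⟩ := Fin.mk_eq_mk.mpr (by omega)
      rw [this]
      rfl

lemma mem_A_iff (K : Type*) [Field K] {t m : ℕ} (hm : 2 ≤ m) (a : Fin (t+m) →₀ ℕ) :
    (monomial a (1:K) ∈ Umt K (t+m) m t) ↔
      ∃ g : ℕ → ℕ, IsChainN m (t+m) g ∧ Sg m g ≤ a := by
  classical
  rw [umt_eq_span K t m hm, mem_ideal_span_monomial_image]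
  rw [support_monomial, if_neg (one_ne_zero : (1:K) ≠ 0)]
  constructor
  · intro hforall
    obtain ⟨si, ⟨g, hchain, rfl⟩, hle⟩ := hforall a (Finset.mem_singleton_self a)
    exact ⟨g, hchain, hle⟩
  · rintro ⟨g, hchain, hle⟩ xi hxi
    rw [Finset.mem_singleton] at hxi
    subst hxi
    exact ⟨Sg m g, ⟨g, hchain, rfl⟩, hle⟩


/-- extend a `Fin`-coded chain to `ℕ → ℕ`. -/
def extC (m N : ℕ) (q : Fin m → Fin N) : ℕ → ℕ :=
  fun j => if h : j < m then (q ⟨j, h⟩ : ℕ) else 0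

lemma sdepth_ge_aux (K : Type*) [Field K] (t m : ℕ) (hm : 2 ≤ m) :
    t + m - t / m ≤ sdepthIdeal K (Umt K (t + m) m t) := by
  classical
  have hm0 : 0 < m := by omega
  set N := t + m with hN
  set A : Set (Fin N →₀ ℕ) :=
    { c | (monomial c (1 : K) : MvPolynomial (Fin N) K) ∈ Umt K N m t } with hA
  set D : Finset ((Fin N →₀ ℕ) × Finset (Fin N)) :=
    (Finset.univ.filter (fun q : Fin m → Fin N => IsChainN m N (extC m N q))).image
      (fun q => (Sg m (extC m N q), Tg m (extC m N q))) with hD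
  have hmemA : ∀ a : Fin N →₀ ℕ, a ∈ A ↔ ∃ g : ℕ → ℕ, IsChainN m N g ∧ Sg m g ≤ a :=
    fun a => mem_A_iff K hm a
  -- any chain can be coded
  have hcode : ∀ g : ℕ → ℕ, IsChainN m N g →
      ∃ q : Fin m → Fin N, IsChainN m N (extC m N q) ∧
        (Sg m (extC m N q) : Fin N →₀ ℕ) = Sg m g ∧ (Tg m (extC m N q) : Finset (Fin N)) = Tg m g := by
    intro g hg
    have hlt : ∀ j : Fin m, g j.1 < N := by
      intro j
      have := hg.2 j.1 j.2
      have h2 : g j.1 ≤ m * g j.1 := Nat.le_mul_of_pos_left _ hm0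
      omega
    refine ⟨fun j => ⟨g j.1, hlt j⟩, ?_, ?_, ?_⟩
    · apply IsChainN_congr (g := g) _ hg
      intro j hj
      simp [extC, hj]
    · apply Sg_congr hm0
      intro j hj
      simp [extC, hj]
    · apply Tg_congr hm0
      intro j hj
      simp [extC, hj]
  have hdec : IsStanleyDecomp A D := by
    constructor
    · rintro p hp a hcone
      rw [hD, Finset.mem_image] at hp
      obtain ⟨q, hq, rfl⟩ := hp
      rw [Finset.mem_filter] at hq
      have := (mem_cone_iff a).mp hcone
      exact (hmemA a).mpr ⟨extC m N q, hq.2, this.1⟩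
    · intro a ha
      obtain ⟨h, hh, hhe⟩ := (hmemA a).mp ha
      obtain ⟨g, hg, hge, hgmin⟩ := greedy_exists hm0 hh hhe
      obtain ⟨q, hq, hqS, hqT⟩ := hcode g hg
      refine ⟨(Sg m g, Tg m g), ⟨?_, ?_⟩, ?_⟩
      · rw [hD, Finset.mem_image]
        exact ⟨q, Finset.mem_filter.mpr ⟨Finset.mem_univ q, hq⟩, by rw [hqS, hqT]⟩
      · exact (mem_cone_iff a).mpr ⟨hge, hgmin⟩
      · rintro p' ⟨hp', hcone'⟩
        rw [hD, Finset.mem_image] at hp'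
        obtain ⟨q', hq', rfl⟩ := hp'
        rw [Finset.mem_filter] at hq'
        obtain ⟨hle', hmin'⟩ := (mem_cone_iff a).mp hcone'
        have heq := greedy_unique hm0 hq'.2 hg hle' hmin' hge hgmin
        exact Prod.ext (Sg_congr hm0 heq) (Tg_congr hm0 heq)
  have hcard : ∀ p ∈ D, t + m - t / m ≤ p.2.card := by
    intro p hp
    rw [hD, Finset.mem_image] at hp
    obtain ⟨q, hq, rfl⟩ := hp
    rw [Finset.mem_filter] at hq
    have hg := hq.2
    have h1 : N - extC m N q (m - 1) ≤ (Tg m (extC m N q) : Finset (Fin N)).card :=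
      Tg_card_ge hm0 hg
    have h2 : extC m N q (m - 1) ≤ t / m := by
      have h3 := hg.2 (m - 1) (by omega)
      rw [Nat.le_div_iff_mul_le hm0, Nat.mul_comm]
      omega
    simp only
    omega
  -- A is nonempty
  have hA0 : (Sg m (fun _ => 0) : Fin N →₀ ℕ) ∈ A := by
    rw [hmemA]
    exact ⟨fun _ => 0, ⟨fun _ _ => le_rfl, fun j hj => by simpa using by omega⟩, le_rfl⟩
  have hbdd : BddAbove { k | ∃ D', IsStanleyDecomp A D' ∧ ∀ p ∈ D', k ≤ p.2.card } := by
    refine ⟨N, ?_⟩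
    rintro k ⟨D', hD', hcard'⟩
    obtain ⟨p, ⟨hpD, hpc⟩, -⟩ := hD'.2 _ hA0
    calc k ≤ p.2.card := hcard' p hpD
      _ ≤ (Finset.univ : Finset (Fin N)).card := Finset.card_le_univ _
      _ = N := by rw [Finset.card_univ, Fintype.card_fin]
  exact le_csSup hbdd ⟨D, hdec, hcard⟩

end UmtProof

/-- **Lemma 2.4(4).** Let `K` be a field and `t, m ≥ 2`. Then
`sdepth(U_{m,t}) ≥ t + m - (t + m - m⌈t/m⌉)⌊(⌈t/m⌉+1)/2⌋ - (m⌈t/m⌉ - t)⌊⌈t/m⌉/2⌋`. -/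
theorem sdepth_Umt_ge (K : Type*) [Field K] (t m : ℕ) (ht : 2 ≤ t) (hm : 2 ≤ m) :
    (t : ℤ) + m - ((t : ℤ) + m - m * ⌈(t : ℚ) / m⌉) * ⌊((⌈(t : ℚ) / m⌉ : ℚ) + 1) / 2⌋ -
        ((m : ℤ) * ⌈(t : ℚ) / m⌉ - t) * ⌊((⌈(t : ℚ) / m⌉ : ℚ)) / 2⌋ ≤
      (sdepthIdeal K (Umt K (t + m) m t) : ℤ) := by
  have haux := UmtProof.sdepth_ge_aux K t m hm
  have hcast : ((t + m - t / m : ℕ) : ℤ) ≤ (sdepthIdeal K (Umt K (t + m) m t) : ℤ) := by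
    exact_mod_cast haux
  refine le_trans ?_ hcast
  -- pure arithmetic
  have hm0 : (0:ℚ) < m := by positivity
  set C : ℤ := ⌈(t : ℚ) / m⌉ with hC
  have hC1 : 1 ≤ C := by
    rw [hC]
    apply Int.ceil_pos.mpr
    positivity
  have htC : (t : ℤ) ≤ m * C := by
    have h1 : (t : ℚ) / m ≤ (C : ℚ) := Int.le_ceil _
    have h2 : (t : ℚ) ≤ (C : ℚ) * m := (div_le_iff₀ hm0).mp h1
    have h3 : (t : ℚ) ≤ ((m * C : ℤ) : ℚ) := by push_cast; linarith
    exact_mod_cast h3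
  have hCt : (m : ℤ) * (C - 1) < t := by
    by_contra hcon
    push_neg at hcon
    have h1 : (t : ℚ) ≤ ((m * (C - 1) : ℤ) : ℚ) := by exact_mod_cast hcon
    have h2 : (t : ℚ) / m ≤ ((C - 1 : ℤ) : ℚ) := by
      rw [div_le_iff₀ hm0]
      push_cast at h1 ⊢
      linarith
    have h3 : C ≤ C - 1 := hC ▸ Int.ceil_le.mpr h2
    omega
  have hF1 : ⌊((C : ℚ) + 1) / 2⌋ = (C + 1) / 2 := by
    have := Rat.floor_intCast_div_natCast (C + 1) 2
    push_cast at this ⊢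
    convert this using 2 <;> norm_num
  have hF2 : ⌊((C : ℚ)) / 2⌋ = C / 2 := by
    have := Rat.floor_intCast_div_natCast C 2
    push_cast at this ⊢
    convert this using 2 <;> norm_num
  rw [hF1, hF2]
  -- now a statement about integers
  set q : ℕ := t / m with hq
  have hq1 : (m : ℤ) * q ≤ t := by
    have h := Nat.mul_div_le t m
    exact_mod_cast h
  have hcast2 : ((t + m - t / m : ℕ) : ℤ) = (t : ℤ) + m - q := by
    have hqt : t / m ≤ t + m := le_trans (Nat.div_le_self t m) (by omega)
    rw [Nat.cast_sub hqt, Nat.cast_add]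
  rw [hcast2]
  have hqC : (q : ℤ) ≤ C :=
    le_of_mul_le_mul_left (le_trans hq1 htC) (by exact_mod_cast (by omega : 0 < m))
  have hCt' : (m : ℤ) * C - m < t := by
    have he : (m : ℤ) * (C - 1) = m * C - m := by ring
    omega
  set r : ℤ := (m : ℤ) * C - t with hr
  have h0r : 0 ≤ r := by omega
  have hrm : r < m := by omega
  set u : ℤ := C / 2 with hu'def
  set u' : ℤ := (C + 1) / 2 with hu''def
  have hu : u + u' = C := by omega
  have hu0 : 0 ≤ u := by omega
  have huu1 : u ≤ u' := by omega
  have huu2 : u' ≤ u + 1 := by omega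
  have e1 : (t : ℤ) + m - m * C = m - r := by omega
  rw [e1]
  have key : (q : ℤ) ≤ (m - r) * u' + r * u := by
    rcases eq_or_lt_of_le h0r with hr0 | hr1
    · have hsum : ((m : ℤ) - r) * u' + r * u = m * u' := by rw [← hr0]; ring
      have h2u : 2 * u' ≤ (m : ℤ) * u' :=
        mul_le_mul_of_nonneg_right (by exact_mod_cast hm) (by omega)
      rw [hsum]
      linarith
    · have hqC1 : (q : ℤ) ≤ C - 1 := by
        have hlt : (m : ℤ) * q < m * C := by omega
        have := lt_of_mul_lt_mul_left hlt (by positivity : (0:ℤ) ≤ (m:ℤ))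
        omega
      have h2u : 2 * u ≤ (m : ℤ) * u :=
        mul_le_mul_of_nonneg_right (by exact_mod_cast hm) hu0
      have hmr : ((m : ℤ) - r) * u ≤ ((m : ℤ) - r) * u' :=
        mul_le_mul_of_nonneg_left huu1 (by omega)
      have hexp : ((m : ℤ) - r) * u + r * u = m * u := by ring
      linarith
  linarith
end
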